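/- Let Σ = A₁ A₂ A₁ᴴ be an eigen-decomposition of a Hermitian matrix Σ ∈ ℂ^{n×n}, with A₁ unitary and A₂ diagonal with real diagonal entries d₁,…,dₙ. Fix κ ∈ ℝ with dᵢdⱼ + κ ≠ 0 for all i,j. Then the matrix equation Σ A Σᴴ + κ A = C has the unique solution A = A₁ A₃ A₁ᴴ, where A₃ is defined entrywise by (A₃)_{ij} = (A₁ᴴ C A₁)_{ij} / (dᵢ dⱼ + κ). -/

import Mathlib

open Matrix

theorem sylvester_like_unique_solution {n : ℕ}
    (Sig A₁ C : Matrix (Fin n) (Fin n) ℂ) (d : Fin n → ℝ) (κ : ℝ)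
    (hSig : Sig = A₁ * Matrix.diagonal (fun i => (d i : ℂ)) * A₁ᴴ)
    (hU₁ : A₁ᴴ * A₁ = 1) (hU₂ : A₁ * A₁ᴴ = 1)
    (hκ : ∀ i j, d i * d j + κ ≠ 0) :
    ∀ A : Matrix (Fin n) (Fin n) ℂ,
      Sig * A * Sigᴴ + (κ : ℂ) • A = C ↔
        A = A₁ * (Matrix.of fun i j => (A₁ᴴ * C * A₁) i j / ((d i * d j + κ : ℝ) : ℂ)) * A₁ᴴ := by
  intro A
  set D : Matrix (Fin n) (Fin n) ℂ := Matrix.diagonal (fun i => (d i : ℂ)) with hD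
  have hDH : Dᴴ = D := by
    rw [hD]
    simp [Matrix.diagonal_conjTranspose, Pi.star_def, Complex.conj_ofReal]
  have hSigH : Sigᴴ = A₁ * D * A₁ᴴ := by
    rw [hSig]
    simp only [Matrix.conjTranspose_mul, Matrix.conjTranspose_conjTranspose, hDH,
      Matrix.mul_assoc]
  have hκ' : ∀ i j, ((d i * d j + κ : ℝ) : ℂ) ≠ 0 := fun i j =>
    Complex.ofReal_ne_zero.mpr (hκ i j)
  set A₃ : Matrix (Fin n) (Fin n) ℂ :=
    Matrix.of fun i j => (A₁ᴴ * C * A₁) i j / ((d i * d j + κ : ℝ) : ℂ) with hA₃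
  have sand : ∀ Y : Matrix (Fin n) (Fin n) ℂ, A₁ᴴ * (A₁ * Y * A₁ᴴ) * A₁ = Y := fun Y => by
    calc A₁ᴴ * (A₁ * Y * A₁ᴴ) * A₁ = (A₁ᴴ * A₁) * (Y * (A₁ᴴ * A₁)) := by
          simp only [Matrix.mul_assoc]
      _ = Y := by rw [hU₁]; simp
  have sand' : ∀ Y : Matrix (Fin n) (Fin n) ℂ, A₁ * (A₁ᴴ * Y * A₁) * A₁ᴴ = Y := fun Y => by
    calc A₁ * (A₁ᴴ * Y * A₁) * A₁ᴴ = (A₁ * A₁ᴴ) * (Y * (A₁ * A₁ᴴ)) := by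
          simp only [Matrix.mul_assoc]
      _ = Y := by rw [hU₂]; simp
  have expand : ∀ M : Matrix (Fin n) (Fin n) ℂ,
      A₁ * D * A₁ᴴ * M * (A₁ * D * A₁ᴴ) = A₁ * (D * (A₁ᴴ * M * A₁) * D) * A₁ᴴ := fun M => by
    simp only [Matrix.mul_assoc]
  constructor
  · intro h
    have key : D * (A₁ᴴ * A * A₁) * D + (κ : ℂ) • (A₁ᴴ * A * A₁) = A₁ᴴ * C * A₁ := by
      rw [← h, hSigH, hSig, Matrix.mul_add, Matrix.add_mul]
      congr 1
      · rw [expand, sand]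
      · rw [Matrix.mul_smul, Matrix.smul_mul]
    have hBA₃ : A₁ᴴ * A * A₁ = A₃ := by
      ext i j
      have hk : (D * (A₁ᴴ * A * A₁) * D + (κ : ℂ) • (A₁ᴴ * A * A₁)) i j
          = (A₁ᴴ * C * A₁) i j := by rw [key]
      simp only [Matrix.add_apply, Matrix.smul_apply, smul_eq_mul, hD,
        Matrix.mul_diagonal, Matrix.diagonal_mul] at hk
      rw [hA₃]
      simp only [Matrix.of_apply]
      rw [eq_div_iff (hκ' i j)]
      push_cast
      linear_combination hk
    rw [← hBA₃]
    exact (sand' A).symm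
  · intro h
    have hne : ∀ i j, ((d i : ℂ) * (d j : ℂ) + (κ : ℂ)) ≠ 0 := fun i j => by
      have := hκ' i j; push_cast at this; exact this
    have hmid : D * A₃ * D + (κ : ℂ) • A₃ = A₁ᴴ * C * A₁ := by
      ext i j
      simp only [Matrix.add_apply, Matrix.smul_apply, smul_eq_mul, hD,
        Matrix.mul_diagonal, Matrix.diagonal_mul, hA₃, Matrix.of_apply]
      push_cast
      field_simp [hne i j]
    rw [h, hSigH, hSig, expand, sand]
    have e2 : (κ : ℂ) • (A₁ * A₃ * A₁ᴴ) = A₁ * ((κ : ℂ) • A₃) * A₁ᴴ := by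
      rw [Matrix.mul_smul, Matrix.smul_mul]
    rw [e2, ← Matrix.add_mul, ← Matrix.mul_add, hmid, sand']
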